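/- arXiv:2105.10432 — 3 statements merged into one kernel-verified Lean document; each statement's English description precedes it below -/
import Mathlib

section
/- Let A be self-adjoint positive definite with eigenvalues λ_k. If |r(λ) − f(λ)^{-1}| ≤ ε f(λ)^{-1} for all eigenvalues λ of A, then ũ = r(A)φ satisfies both ‖ũ − u‖_{f(A)} ≤ ε ‖φ‖_{f(A)^{-1}} and ‖ũ − u‖ ≤ ε ‖φ‖_{f(A)^{-2}}, where u = f(A)^{-1}φ. -/
open scoped RealInnerProductSpace

/-- Relative-error approximation: if `|r(λ) − f(λ)⁻¹| ≤ ε f(λ)⁻¹` on the spectrum, then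
`‖ũ − u‖_{f(A)} ≤ ε ‖φ‖_{f(A)⁻¹}` and `‖ũ − u‖ ≤ ε ‖φ‖_{f(A)^{-2}}`. -/
theorem stmt3
    {H : Type*} [NormedAddCommGroup H] [InnerProductSpace ℝ H] [FiniteDimensional ℝ H]
    (K : ℕ) (ψ : OrthonormalBasis (Fin K) ℝ H) (lam : Fin K → ℝ)
    (f r : ℝ → ℝ) (hf : ∀ k, 0 < f (lam k))
    (ε : ℝ) (happrox : ∀ k, |r (lam k) - (f (lam k))⁻¹| ≤ ε * (f (lam k))⁻¹)
    (φ u utilde : H)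
    (hu : u = ∑ k, (f (lam k))⁻¹ • (⟪φ, ψ k⟫ • ψ k))
    (hut : utilde = ∑ k, r (lam k) • (⟪φ, ψ k⟫ • ψ k)) :
    Real.sqrt (∑ k, f (lam k) * ⟪utilde - u, ψ k⟫ ^ 2)
      ≤ ε * Real.sqrt (∑ k, (f (lam k))⁻¹ * ⟪φ, ψ k⟫ ^ 2) ∧
    ‖utilde - u‖ ≤ ε * Real.sqrt (∑ k, ((f (lam k)) ^ 2)⁻¹ * ⟪φ, ψ k⟫ ^ 2) := by
  have horth := orthonormal_iff_ite.mp ψ.orthonormal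
  have hcoef : ∀ k, ⟪utilde - u, ψ k⟫ = (r (lam k) - (f (lam k))⁻¹) * ⟪φ, ψ k⟫ := by
    intro k
    rw [inner_sub_left, hu, hut]
    simp [sum_inner, real_inner_smul_left, horth, Finset.sum_ite_eq']
    ring
  -- case K = 0
  rcases Nat.eq_zero_or_pos K with hK | hK
  · subst hK
    have h0 : utilde - u = 0 := by rw [hu, hut]; simp
    simp [h0]
  -- ε ≥ 0
  have hε : 0 ≤ ε := by
    obtain ⟨k⟩ : Nonempty (Fin K) := ⟨⟨0, hK⟩⟩
    have h1 := (abs_nonneg _).trans (happrox k)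
    nlinarith [hf k, inv_pos.mpr (hf k)]
  have key : ∀ k, (r (lam k) - (f (lam k))⁻¹) ^ 2 ≤ ε ^ 2 * ((f (lam k))⁻¹) ^ 2 := by
    intro k
    have := happrox k
    have h2 : |r (lam k) - (f (lam k))⁻¹| ^ 2 ≤ (ε * (f (lam k))⁻¹) ^ 2 :=
      pow_le_pow_left₀ (abs_nonneg _) this 2
    rw [sq_abs] at h2
    nlinarith
  constructor
  · have hsum : ∑ k, f (lam k) * ⟪utilde - u, ψ k⟫ ^ 2
        ≤ ε ^ 2 * ∑ k, (f (lam k))⁻¹ * ⟪φ, ψ k⟫ ^ 2 := by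
      rw [Finset.mul_sum]
      apply Finset.sum_le_sum
      intro k _
      rw [hcoef k, mul_pow]
      have hk := hf k
      have hinv : (f (lam k))⁻¹ ≥ 0 := le_of_lt (inv_pos.mpr hk)
      have h3 := key k
      have h4 : f (lam k) * (f (lam k))⁻¹ ^ 2 = (f (lam k))⁻¹ := by
        rw [sq, ← mul_assoc, mul_inv_cancel₀ hk.ne', one_mul]
      have h5 := mul_le_mul_of_nonneg_right h3 (sq_nonneg (⟪φ, ψ k⟫))
      calc f (lam k) * ((r (lam k) - (f (lam k))⁻¹) ^ 2 * ⟪φ, ψ k⟫ ^ 2)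
          ≤ f (lam k) * (ε ^ 2 * (f (lam k))⁻¹ ^ 2 * ⟪φ, ψ k⟫ ^ 2) :=
            mul_le_mul_of_nonneg_left h5 hk.le
        _ = f (lam k) * (f (lam k))⁻¹ ^ 2 * (ε ^ 2 * ⟪φ, ψ k⟫ ^ 2) := by ring
        _ = ε ^ 2 * ((f (lam k))⁻¹ * ⟪φ, ψ k⟫ ^ 2) := by rw [h4]; ring
    calc Real.sqrt (∑ k, f (lam k) * ⟪utilde - u, ψ k⟫ ^ 2)
        ≤ Real.sqrt (ε ^ 2 * ∑ k, (f (lam k))⁻¹ * ⟪φ, ψ k⟫ ^ 2) :=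
          Real.sqrt_le_sqrt hsum
      _ = ε * Real.sqrt (∑ k, (f (lam k))⁻¹ * ⟪φ, ψ k⟫ ^ 2) := by
          rw [Real.sqrt_mul (sq_nonneg ε), Real.sqrt_sq hε]
  · have hnorm : ‖utilde - u‖ = Real.sqrt (∑ k, ⟪utilde - u, ψ k⟫ ^ 2) := by
      rw [← Real.sqrt_sq (norm_nonneg (utilde - u))]
      congr 1
      rw [← real_inner_self_eq_norm_sq, ← ψ.sum_inner_mul_inner (utilde - u) (utilde - u)]
      apply Finset.sum_congr rfl
      intro k _
      rw [real_inner_comm (ψ k)]; ring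
    rw [hnorm]
    have hsum : ∑ k, ⟪utilde - u, ψ k⟫ ^ 2
        ≤ ε ^ 2 * ∑ k, ((f (lam k)) ^ 2)⁻¹ * ⟪φ, ψ k⟫ ^ 2 := by
      rw [Finset.mul_sum]
      apply Finset.sum_le_sum
      intro k _
      rw [hcoef k, mul_pow]
      have h3 := key k
      have h4 : ((f (lam k)) ^ 2)⁻¹ = ((f (lam k))⁻¹) ^ 2 := by
        rw [inv_pow]
      rw [h4]
      nlinarith [sq_nonneg (⟪φ, ψ k⟫), mul_le_mul_of_nonneg_right h3 (sq_nonneg (⟪φ, ψ k⟫))]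
    calc Real.sqrt (∑ k, ⟪utilde - u, ψ k⟫ ^ 2)
        ≤ Real.sqrt (ε ^ 2 * ∑ k, ((f (lam k)) ^ 2)⁻¹ * ⟪φ, ψ k⟫ ^ 2) :=
          Real.sqrt_le_sqrt hsum
      _ = ε * Real.sqrt (∑ k, ((f (lam k)) ^ 2)⁻¹ * ⟪φ, ψ k⟫ ^ 2) := by
          rw [Real.sqrt_mul (sq_nonneg ε), Real.sqrt_sq hε]
end

section
/- For 0 < α < 1 and λ > 0, the change of variables θ = η^{1/(1−α)}(1−η)^{−κ/α} with κ > 1 transforms the Balakrishnan formula into λ^{−α} = (sin(πα)/((1−α)π)) ∫₀¹ (1−η)^{κ−1} (1 + (κ(1−α)/α − 1)η) (η^{1/(1−α)} + (1−η)^{κ/α} λ)^{−1} dη. -/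
open Real MeasureTheory Set

lemma beta_reflection {a : ℝ} (h0 : 0 < a) (h1 : a < 1) :
    ∫ t in Set.Ioo (0:ℝ) 1, t ^ (-a) * (1 - t) ^ (a - 1)
      = Real.pi / Real.sin (Real.pi * a) := by
  have h1a : (0:ℝ) < 1 - a := by linarith
  have hbeta : Complex.betaIntegral ((1 - a : ℝ) : ℂ) ((a : ℝ) : ℂ)
      = ((Real.pi / Real.sin (Real.pi * a) : ℝ) : ℂ) := by
    have h := Complex.Gamma_mul_Gamma_eq_betaIntegral
      (s := ((1 - a : ℝ) : ℂ)) (t := ((a : ℝ) : ℂ)) (by simpa using h1a) (by simpa using h0)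
    have hsum : ((1 - a : ℝ) : ℂ) + ((a : ℝ) : ℂ) = 1 := by push_cast; ring
    rw [hsum, Complex.Gamma_one, one_mul] at h
    rw [← h, Complex.Gamma_ofReal, Complex.Gamma_ofReal, ← Complex.ofReal_mul, mul_comm,
      Real.Gamma_mul_Gamma_one_sub a]
  have hint : Complex.betaIntegral ((1 - a : ℝ) : ℂ) ((a : ℝ) : ℂ)
      = ((∫ t in Set.Ioo (0:ℝ) 1, t ^ (-a) * (1 - t) ^ (a - 1) : ℝ) : ℂ) := by
    rw [Complex.betaIntegral, intervalIntegral.integral_of_le zero_le_one,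
      MeasureTheory.integral_Ioc_eq_integral_Ioo,
      show ((∫ t in Set.Ioo (0:ℝ) 1, t ^ (-a) * (1 - t) ^ (a - 1) : ℝ) : ℂ)
          = ∫ t in Set.Ioo (0:ℝ) 1, ((t ^ (-a) * (1 - t) ^ (a - 1) : ℝ) : ℂ) from integral_ofReal.symm]
    apply MeasureTheory.setIntegral_congr_fun measurableSet_Ioo
    intro x hx
    obtain ⟨hx0, hx1⟩ := hx
    have e1 : ((1 - a : ℝ) : ℂ) - 1 = ((-a : ℝ) : ℂ) := by push_cast; ring
    have e2 : ((a : ℝ) : ℂ) - 1 = ((a - 1 : ℝ) : ℂ) := by push_cast; ring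
    have e3 : (1 : ℂ) - (x : ℂ) = ((1 - x : ℝ) : ℂ) := by push_cast; ring
    simp only [e1, e2, e3]
    rw [← Complex.ofReal_cpow hx0.le, ← Complex.ofReal_cpow (by linarith), ← Complex.ofReal_mul]
  rw [hint] at hbeta
  exact_mod_cast hbeta

/-- Transformed Balakrishnan formula on the unit interval: for `λ > 0`, `0 < α < 1`, `κ > 1`,
`λ^{−α} = (sin(πα)/((1−α)π)) ∫₀¹ (1−η)^{κ−1}(1+(κ(1−α)/α−1)η)(η^{1/(1−α)}+(1−η)^{κ/α}λ)⁻¹ dη`. -/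
theorem stmt13
    (lam α κ : ℝ) (hlam : 0 < lam) (hα0 : 0 < α) (hα1 : α < 1) (hκ : 1 < κ) :
    lam ^ (-α)
      = Real.sin (Real.pi * α) / ((1 - α) * Real.pi) *
          ∫ η in (0:ℝ)..1,
            (1 - η) ^ (κ - 1) * (1 + (κ * (1 - α) / α - 1) * η) *
              (η ^ ((1:ℝ) / (1 - α)) + (1 - η) ^ (κ / α) * lam)⁻¹ := by
  have h1a : (0:ℝ) < 1 - α := by linarith
  set p : ℝ := 1 / (1 - α) with hp_def
  set q : ℝ := κ / α with hq_def
  have hp : 0 < p := by positivity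
  have hq : 0 < q := by positivity
  have hpa : p * (1 - α) = 1 := by rw [hp_def]; field_simp
  have hqa : q * α = κ := by rw [hq_def]; field_simp
  set D : ℝ → ℝ := fun η => η ^ p + (1 - η) ^ q * lam with hD_def
  set φ : ℝ → ℝ := fun η => η ^ p / D η with hφ_def
  set F : ℝ → ℝ := fun η =>
      (1 - η) ^ (κ - 1) * (1 + (κ * (1 - α) / α - 1) * η) * (D η)⁻¹ with hF_def
  -- positivity of D on Icc
  have hD_pos : ∀ η ∈ Icc (0:ℝ) 1, 0 < D η := by
    intro η hη
    rcases eq_or_lt_of_le hη.1 with h | h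
    · simp only [hD_def, ← h, Real.zero_rpow hp.ne', Real.one_rpow]
      simpa using hlam
    · have : 0 < η ^ p := Real.rpow_pos_of_pos h p
      have h2 : 0 ≤ (1 - η) ^ q * lam :=
        mul_nonneg (Real.rpow_nonneg (by linarith [hη.2]) q) hlam.le
      simp only [hD_def]; linarith
  -- derivative of φ on Ioo
  have key : ∀ η ∈ Ioo (0:ℝ) 1, HasDerivAt φ
      (lam * η ^ (p - 1) * (1 - η) ^ (q - 1) * (p * (1 - η) + q * η) / (D η) ^ 2) η := by
    intro η hη
    obtain ⟨hη0, hη1⟩ := hη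
    have hη1' : (0:ℝ) < 1 - η := by linarith
    have hA : HasDerivAt (fun x : ℝ => x ^ p) (p * η ^ (p - 1)) η :=
      Real.hasDerivAt_rpow_const (Or.inl hη0.ne')
    have hB : HasDerivAt (fun x : ℝ => (1 - x) ^ q) (q * (1 - η) ^ (q - 1) * (0 - 1)) η := by
      exact (Real.hasDerivAt_rpow_const (x := 1 - η) (Or.inl hη1'.ne')).comp η
        ((hasDerivAt_const η (1:ℝ)).sub (hasDerivAt_id η))
    have hD' : HasDerivAt D (p * η ^ (p - 1) + q * (1 - η) ^ (q - 1) * (0 - 1) * lam) η :=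
      hA.add (hB.mul_const lam)
    have hDne : D η ≠ 0 := (hD_pos η ⟨hη0.le, hη1.le⟩).ne'
    have hdiv := hA.div hD' hDne
    refine hdiv.congr_deriv ?_
    have e1 : η ^ p = η ^ (p - 1) * η := by
      rw [← Real.rpow_add_one hη0.ne' (p - 1), sub_add_cancel]
    have e2 : (1 - η) ^ q = (1 - η) ^ (q - 1) * (1 - η) := by
      rw [← Real.rpow_add_one hη1'.ne' (q - 1), sub_add_cancel]
    simp only [hD_def]
    rw [e1, e2]
    ring
  -- continuity of φ on Icc
  have hcontA : Continuous fun x : ℝ => x ^ p :=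
    continuous_iff_continuousAt.mpr fun x => Real.continuousAt_rpow_const x p (Or.inr hp.le)
  have hcontB : Continuous fun x : ℝ => (1 - x) ^ q :=
    (continuous_iff_continuousAt.mpr fun x =>
      Real.continuousAt_rpow_const x q (Or.inr hq.le)).comp (continuous_const.sub continuous_id)
  have hcontD : Continuous D := by
    rw [hD_def]; exact hcontA.add (hcontB.mul continuous_const)
  have hcontφ : ContinuousOn φ (Icc 0 1) :=
    (hcontA.continuousOn).div hcontD.continuousOn fun x hx => (hD_pos x hx).ne'
  -- φ values at endpoints
  have hφ0 : φ 0 = 0 := by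
    simp [hφ_def, hD_def, Real.zero_rpow hp.ne']
  have hφ1 : φ 1 = 1 := by
    simp [hφ_def, hD_def, Real.zero_rpow hq.ne', Real.one_rpow]
  -- strict monotonicity, hence injectivity
  have hmono : StrictMonoOn φ (Icc 0 1) := by
    apply strictMonoOn_of_deriv_pos (convex_Icc 0 1) hcontφ
    intro x hx
    rw [interior_Icc] at hx
    rw [(key x hx).deriv]
    obtain ⟨hx0, hx1⟩ := hx
    have hx1' : (0:ℝ) < 1 - x := by linarith
    apply div_pos
    · apply mul_pos
      apply mul_pos
      apply mul_pos hlam (Real.rpow_pos_of_pos hx0 _)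
      exact Real.rpow_pos_of_pos hx1' _
      have := mul_pos hp hx1'
      have := mul_pos hq hx0
      linarith
    · exact pow_pos (hD_pos x ⟨hx0.le, hx1.le⟩) 2
  -- image of Ioo
  have himg : φ '' Ioo 0 1 = Ioo 0 1 := by
    apply Subset.antisymm
    · rintro _ ⟨x, ⟨hx0, hx1⟩, rfl⟩
      have hx1' : (0:ℝ) < 1 - x := by linarith
      have hDp := hD_pos x ⟨hx0.le, hx1.le⟩
      have hAp : 0 < x ^ p := Real.rpow_pos_of_pos hx0 p
      have hBp : 0 < (1 - x) ^ q * lam := mul_pos (Real.rpow_pos_of_pos hx1' q) hlam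
      constructor
      · exact div_pos hAp hDp
      · rw [div_lt_one hDp]
        simp only [hD_def]; linarith
    · intro y hy
      have : y ∈ Icc (φ 0) (φ 1) := by
        rw [hφ0, hφ1]; exact ⟨hy.1.le, hy.2.le⟩
      obtain ⟨x, hx, hxy⟩ := intermediate_value_Icc zero_le_one hcontφ this
      have hxne0 : x ≠ 0 := by
        rintro rfl; rw [hφ0] at hxy; exact hy.1.ne hxy
      have hxne1 : x ≠ 1 := by
        rintro rfl; rw [hφ1] at hxy; exact hy.2.ne' hxy
      exact ⟨x, ⟨lt_of_le_of_ne hx.1 (Ne.symm hxne0), lt_of_le_of_ne hx.2 hxne1⟩, hxy⟩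
  -- change of variables
  have hsub := MeasureTheory.integral_image_eq_integral_abs_deriv_smul measurableSet_Ioo
    (fun x hx => (key x hx).hasDerivWithinAt)
    (hmono.injOn.mono Ioo_subset_Icc_self)
    (fun t => t ^ (-α) * (1 - t) ^ (α - 1))
  rw [himg, beta_reflection hα0 hα1] at hsub
  -- pointwise identity on Ioo
  have hpt : ∀ x ∈ Ioo (0:ℝ) 1,
      |lam * x ^ (p - 1) * (1 - x) ^ (q - 1) * (p * (1 - x) + q * x) / (D x) ^ 2| •
        ((φ x) ^ (-α) * (1 - φ x) ^ (α - 1))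
      = lam ^ α / (1 - α) * F x := by
    intro x hx
    obtain ⟨hx0, hx1⟩ := hx
    have hx1' : (0:ℝ) < 1 - x := by linarith
    have hDp := hD_pos x ⟨hx0.le, hx1.le⟩
    have hAp : 0 < x ^ p := Real.rpow_pos_of_pos hx0 p
    have hBp : 0 < (1 - x) ^ q := Real.rpow_pos_of_pos hx1' q
    have habs : |lam * x ^ (p - 1) * (1 - x) ^ (q - 1) * (p * (1 - x) + q * x) / (D x) ^ 2|
        = lam * x ^ (p - 1) * (1 - x) ^ (q - 1) * (p * (1 - x) + q * x) / (D x) ^ 2 := by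
      apply abs_of_pos
      apply div_pos
      · apply mul_pos
        apply mul_pos
        apply mul_pos hlam (Real.rpow_pos_of_pos hx0 _)
        exact Real.rpow_pos_of_pos hx1' _
        have := mul_pos hp hx1'
        have := mul_pos hq hx0
        linarith
      · exact pow_pos hDp 2
    rw [smul_eq_mul, habs]
    have h1φ : 1 - φ x = (1 - x) ^ q * lam / D x := by
      simp only [hφ_def, hD_def]
      field_simp
      ring
    have hφx : φ x = x ^ p / D x := rfl
    rw [hφx, h1φ]
    rw [Real.div_rpow hAp.le hDp.le, Real.div_rpow (by positivity) hDp.le]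
    rw [Real.mul_rpow hBp.le hlam.le]
    -- now pure rpow algebra
    have hDα : D x ^ (-α) = (D x ^ α)⁻¹ := Real.rpow_neg hDp.le α
    have hDα1 : D x ^ (α - 1) = (D x ^ (1 - α))⁻¹ := by
      rw [show α - 1 = -(1 - α) by ring, Real.rpow_neg hDp.le]
    rw [← Real.rpow_mul hx0.le, ← Real.rpow_mul hx1'.le, hDα, hDα1]
    simp only [div_inv_eq_mul]
    have E1 : x ^ (p - 1) * x ^ (p * (-α)) = 1 := by
      rw [← Real.rpow_add hx0, show p - 1 + p * (-α) = 0 from by linear_combination hpa,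
        Real.rpow_zero]
    have E2 : (1 - x) ^ (q - 1) * (1 - x) ^ (q * (α - 1)) = (1 - x) ^ (κ - 1) := by
      rw [← Real.rpow_add hx1']
      congr 1
      linear_combination hqa
    have E3 : lam * lam ^ (α - 1) = lam ^ α := by
      nth_rewrite 1 [← Real.rpow_one lam]
      rw [← Real.rpow_add hlam]
      norm_num
    have E4 : D x ^ α * D x ^ (1 - α) = D x := by
      rw [← Real.rpow_add hDp, show α + (1 - α) = 1 from by ring, Real.rpow_one]
    have E5 : p * (1 - x) + q * x = (1 + (κ * (1 - α) / α - 1) * x) / (1 - α) := by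
      rw [hp_def, hq_def]
      field_simp
      ring
    simp only [hF_def]
    trans ((lam * lam ^ (α - 1)) * (x ^ (p - 1) * x ^ (p * (-α)))
        * ((1 - x) ^ (q - 1) * (1 - x) ^ (q * (α - 1)))
        * ((D x ^ α * D x ^ (1 - α)) / D x ^ 2) * (p * (1 - x) + q * x))
    · ring
    rw [E1, E2, E3, E4, E5]
    field_simp
  -- assemble
  have hcong : (∫ x in Ioo (0:ℝ) 1,
        |lam * x ^ (p - 1) * (1 - x) ^ (q - 1) * (p * (1 - x) + q * x) / (D x) ^ 2| •
          ((φ x) ^ (-α) * (1 - φ x) ^ (α - 1)))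
      = ∫ x in Ioo (0:ℝ) 1, lam ^ α / (1 - α) * F x :=
    MeasureTheory.setIntegral_congr_fun measurableSet_Ioo hpt
  rw [hcong, MeasureTheory.integral_const_mul] at hsub
  rw [intervalIntegral.integral_of_le zero_le_one, MeasureTheory.integral_Ioc_eq_integral_Ioo]
  have hIoo : (∫ η in Ioo (0:ℝ) 1,
        (1 - η) ^ (κ - 1) * (1 + (κ * (1 - α) / α - 1) * η)
          * (η ^ p + (1 - η) ^ q * lam)⁻¹)
      = ∫ x in Ioo (0:ℝ) 1, F x := by
    simp only [hF_def, hD_def]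
  rw [hIoo]
  have hsin : 0 < Real.sin (Real.pi * α) := by
    apply Real.sin_pos_of_pos_of_lt_pi
    · positivity
    · nlinarith [Real.pi_pos]
  have hlamα : (0:ℝ) < lam ^ α := Real.rpow_pos_of_pos hlam α
  rw [Real.rpow_neg hlam.le]
  have hpi := Real.pi_pos
  field_simp at hsub ⊢
  nlinarith [hsub, mul_pos hsin hlamα]
end

section
/- Let A be self-adjoint positive definite on a finite-dimensional Hilbert space and r(A) = Σ_{i=1}^m a_i exp(−b_i A) with a_i, b_i > 0. If |r(λ) − f(λ)^{-1}| ≤ ε on σ(A) and approximations w̃_i of w_i = exp(−b_i(A−δI))φ satisfy ‖w̃_i − w_i‖ ≤ ε₀‖φ‖, then ũ̃ = Σ a_i exp(−b_i δ) w̃_i satisfies ‖ũ̃ − f(A)^{-1}φ‖ ≤ (ε + ε₀ r(δ)) ‖φ‖. -/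
open scoped RealInnerProductSpace

lemma stmt18_norm_sum_sq {H : Type*} [NormedAddCommGroup H] [InnerProductSpace ℝ H]
    {K : ℕ} (ψ : OrthonormalBasis (Fin K) ℝ H) (d : Fin K → ℝ) :
    ‖∑ k, d k • ψ k‖ ^ 2 = ∑ k, d k ^ 2 := by
  rw [ψ.sum_repr_symm, LinearIsometryEquiv.norm_map, EuclideanSpace.norm_eq]
  rw [Real.sq_sqrt (by positivity)]
  simp [sq_abs]

/-- Error estimate for the exponential-sums (ES) approximation with inexact
evolutionary solves: `‖ũ̃ − f(A)⁻¹ φ‖ ≤ (ε + ε₀ r(δ)) ‖φ‖`. -/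
theorem stmt18
    {H : Type*} [NormedAddCommGroup H] [InnerProductSpace ℝ H] [FiniteDimensional ℝ H]
    (K : ℕ) (ψ : OrthonormalBasis (Fin K) ℝ H) (lam : Fin K → ℝ)
    (δ : ℝ) (hδ : 0 < δ) (hlam : ∀ k, δ ≤ lam k)
    (f : ℝ → ℝ) (hf : ∀ k, 0 < f (lam k))
    (m : ℕ) (a b : Fin m → ℝ) (ha : ∀ i, 0 < a i) (hb : ∀ i, 0 < b i)
    (ε ε₀ : ℝ)
    (happrox : ∀ k,
      |(∑ i, a i * Real.exp (-(b i) * lam k)) - (f (lam k))⁻¹| ≤ ε)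
    (φ : H) (w wt : Fin m → H)
    (hw : ∀ i, w i = ∑ k, Real.exp (-(b i) * (lam k - δ)) • (⟪φ, ψ k⟫ • ψ k))
    (hwt : ∀ i, ‖wt i - w i‖ ≤ ε₀ * ‖φ‖)
    (u : H) (hu : u = ∑ k, (f (lam k))⁻¹ • (⟪φ, ψ k⟫ • ψ k)) :
    ‖(∑ i, (a i * Real.exp (-(b i) * δ)) • wt i) - u‖
      ≤ (ε + ε₀ * (∑ i, a i * Real.exp (-(b i) * δ))) * ‖φ‖ := by
  rcases Nat.eq_zero_or_pos K with hK | hK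
  · -- H is trivial
    have hfin : Module.finrank ℝ H = 0 := by
      rw [Module.finrank_eq_card_basis ψ.toBasis, Fintype.card_fin, hK]
    have hsub : Subsingleton H := Module.finrank_zero_iff.mp hfin
    have hφ : ‖φ‖ = 0 := by rw [Subsingleton.elim φ 0, norm_zero]
    rw [Subsingleton.elim ((∑ i, (a i * Real.exp (-(b i) * δ)) • wt i) - u) 0,
      norm_zero, hφ, mul_zero]
  · set c : Fin m → ℝ := fun i => a i * Real.exp (-(b i) * δ) with hc
    have hcpos : ∀ i, 0 < c i := fun i => mul_pos (ha i) (Real.exp_pos _)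
    have hε : 0 ≤ ε := le_trans (abs_nonneg _) (happrox ⟨0, hK⟩)
    set r : Fin K → ℝ := fun k => ∑ i, a i * Real.exp (-(b i) * lam k) with hr
    -- the exact sum equals the spectral sum with coefficients r
    have key : ∑ i, c i • w i = ∑ k, r k • (⟪φ, ψ k⟫ • ψ k) := by
      simp_rw [hw, Finset.smul_sum, smul_smul]
      rw [Finset.sum_comm]
      refine Finset.sum_congr rfl fun k _ => ?_
      rw [← Finset.sum_smul]
      congr 1
      rw [hr, Finset.sum_mul]
      refine Finset.sum_congr rfl fun i _ => ?_
      rw [hc, ← mul_assoc, mul_assoc (a i), ← Real.exp_add]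
      ring_nf
    have decomp : (∑ i, c i • wt i) - u
        = (∑ i, c i • (wt i - w i)) + ((∑ i, c i • w i) - u) := by
      simp [smul_sub, Finset.sum_sub_distrib]
    have hterm2 : ‖(∑ i, c i • w i) - u‖ ≤ ε * ‖φ‖ := by
      have hv : (∑ i, c i • w i) - u
          = ∑ k, ((r k - (f (lam k))⁻¹) * ⟪φ, ψ k⟫) • ψ k := by
        rw [key, hu, ← Finset.sum_sub_distrib]
        refine Finset.sum_congr rfl fun k _ => ?_
        rw [smul_smul, smul_smul, ← sub_smul, ← sub_mul]
      have hφsq : ‖φ‖ ^ 2 = ∑ k, ⟪φ, ψ k⟫ ^ 2 := by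
        conv_lhs => rw [← ψ.sum_repr' φ]
        rw [stmt18_norm_sum_sq]
        refine Finset.sum_congr rfl fun k _ => ?_
        rw [real_inner_comm]
      have hsq : ‖(∑ i, c i • w i) - u‖ ^ 2 ≤ (ε * ‖φ‖) ^ 2 := by
        rw [hv, stmt18_norm_sum_sq, mul_pow, hφsq, Finset.mul_sum]
        refine Finset.sum_le_sum fun k _ => ?_
        rw [mul_pow]
        have h1 : (r k - (f (lam k))⁻¹) ^ 2 ≤ ε ^ 2 := by
          rw [← sq_abs (r k - _)]
          exact pow_le_pow_left₀ (abs_nonneg _) (happrox k) 2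
        exact mul_le_mul_of_nonneg_right h1 (sq_nonneg _)
      have := Real.sqrt_le_sqrt hsq
      rwa [Real.sqrt_sq (norm_nonneg _), Real.sqrt_sq (by positivity)] at this
    have hterm1 : ‖∑ i, c i • (wt i - w i)‖ ≤ (∑ i, c i) * (ε₀ * ‖φ‖) := by
      calc ‖∑ i, c i • (wt i - w i)‖ ≤ ∑ i, ‖c i • (wt i - w i)‖ :=
            norm_sum_le _ _
        _ ≤ ∑ i, c i * (ε₀ * ‖φ‖) := by
            refine Finset.sum_le_sum fun i _ => ?_
            rw [norm_smul, Real.norm_eq_abs, abs_of_pos (hcpos i)]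
            exact mul_le_mul_of_nonneg_left (hwt i) (hcpos i).le
        _ = (∑ i, c i) * (ε₀ * ‖φ‖) := by rw [Finset.sum_mul]
    calc ‖(∑ i, c i • wt i) - u‖
        ≤ ‖∑ i, c i • (wt i - w i)‖ + ‖(∑ i, c i • w i) - u‖ := by
          rw [decomp]; exact norm_add_le _ _
      _ ≤ (∑ i, c i) * (ε₀ * ‖φ‖) + ε * ‖φ‖ := add_le_add hterm1 hterm2
      _ = (ε + ε₀ * (∑ i, c i)) * ‖φ‖ := by ring
end
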